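/- (NFE-1 learns symmetry rules.) Let n ∈ ℕ and r_μ, r_σ ∈ ℝⁿ satisfy r_σ ⊙ r_σ = 1 (the all-ones vector) and r_σ ⊙ r_μ + r_μ = 0. Then for all h_μ, h_σ, t_μ, t_σ ∈ ℝⁿ: if r_σ ⊙ h_μ + r_μ = t_μ and |r_σ ⊙ h_σ| = |t_σ|, then r_σ ⊙ t_μ + r_μ = h_μ and |r_σ ⊙ t_σ| = |h_σ|. -/
import Mathlib


open MeasureTheory ProbabilityTheory
open scoped ENNReal NNReal

/-- NFE-1 learns symmetry rules: if r_σ ⊙ r_σ = 1 and r_σ ⊙ r_μ + r_μ = 0, then whenever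
a triplet (h, r, t) attains the maximal score, so does (t, r, h). -/
theorem nfe1_symmetry (n : ℕ) (rμ rσ : Fin n → ℝ)
    (h₁ : rσ * rσ = 1) (h₂ : rσ * rμ + rμ = 0) :
    ∀ hμ hσ tμ tσ : Fin n → ℝ,
      rσ * hμ + rμ = tμ → |rσ * hσ| = |tσ| →
      rσ * tμ + rμ = hμ ∧ |rσ * tσ| = |hσ| := by
  intro hμ hσ tμ tσ ht habs
  have key : ∀ i, |rσ i| = 1 := by
    intro i
    have := congrFun h₁ i
    simp only [Pi.mul_apply, Pi.one_apply] at this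
    nlinarith [abs_nonneg (rσ i), sq_abs (rσ i)]
  constructor
  · funext i
    have e1 := congrFun h₁ i
    have e2 := congrFun h₂ i
    have e3 := congrFun ht i
    simp only [Pi.mul_apply, Pi.add_apply, Pi.one_apply, Pi.zero_apply] at *
    linear_combination -(rσ i) * e3 + e2 + hμ i * e1
  · funext i
    have e := congrFun habs i
    simp only [Pi.abs_apply, Pi.mul_apply, abs_mul, key i, one_mul] at *
    linarith [e]
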